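/- For the mutually unbiased noisy qubit observables A^{tx}(±) = (1/2)(I ± t σ₁) and A^{ty}(±) = (1/2)(I ± t σ₂) with 0 ≤ t ≤ 1, the pair is incompatible if and only if 1/√2 < t ≤ 1. -/

import Mathlib

open Matrix ComplexOrder

noncomputable section

abbrev Mat2 := Matrix (Fin 2) (Fin 2) ℂ

def sigma1 : Mat2 := !![0, 1; 1, 0]
def sigma2 : Mat2 := !![0, -Complex.I; Complex.I, 0]

/-- `A^{tx}(±) = (1/2)(I ± t σ₁)`, `true` = `+`. -/
def Atx (t : ℝ) (s : Bool) : Mat2 :=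
  ((1 : ℂ) / 2) • ((1 : Mat2) + (if s then (1 : ℂ) else -1) • ((t : ℂ) • sigma1))

/-- `A^{ty}(±) = (1/2)(I ± t σ₂)`, `true` = `+`. -/
def Aty (t : ℝ) (s : Bool) : Mat2 :=
  ((1 : ℂ) / 2) • ((1 : Mat2) + (if s then (1 : ℂ) else -1) • ((t : ℂ) • sigma2))

def IsPOVM {ι : Type*} [Fintype ι] {n : Type*} [Fintype n] [DecidableEq n]
    (G : ι → Matrix n n ℂ) : Prop :=
  (∀ i, (G i).PosSemidef) ∧ ∑ i, G i = 1

namespace MubAux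

lemma psd2 (a c : ℝ) (b : ℂ) (ha : 0 ≤ a) (hc : 0 ≤ c) (hb : Complex.normSq b ≤ a*c) :
    (!![(a:ℂ), b; (starRingEnd ℂ) b, (c:ℂ)]).PosSemidef := by
  refine Matrix.posSemidef_iff_dotProduct_mulVec.mpr ⟨?_, ?_⟩
  · ext i j
    fin_cases i <;> fin_cases j <;>
      simp [Matrix.conjTranspose_apply, Complex.conj_ofReal]
  · intro x
    set z := b * (starRingEnd ℂ) (x 0) * x 1 with hz
    have hq : star x ⬝ᵥ (!![(a:ℂ), b; (starRingEnd ℂ) b, (c:ℂ)] *ᵥ x)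
        = ((a * Complex.normSq (x 0) + c * Complex.normSq (x 1) + 2*z.re : ℝ) : ℂ) := by
      have h1 : z + (starRingEnd ℂ) z = ((2*z.re : ℝ) : ℂ) := Complex.add_conj z
      push_cast
      push_cast at h1
      rw [← h1]
      simp [dotProduct, Matrix.mulVec, Pi.star_apply, Matrix.vecHead, Matrix.vecTail, Fin.sum_univ_two, Complex.normSq_eq_conj_mul_self, hz]
      ring
    rw [hq, Complex.zero_le_real]
    have nz : Complex.normSq z = Complex.normSq b * Complex.normSq (x 0) * Complex.normSq (x 1) := by
      rw [hz]; simp [Complex.normSq_mul]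
    have hre : z.re^2 + z.im^2 = Complex.normSq z := by
      rw [Complex.normSq_apply]; ring
    have hn0 := Complex.normSq_nonneg (x 0)
    have hn1 := Complex.normSq_nonneg (x 1)
    have hS : 0 ≤ a * Complex.normSq (x 0) + c * Complex.normSq (x 1) := by positivity
    have hS2 : (2*z.re)^2 ≤ (a * Complex.normSq (x 0) + c * Complex.normSq (x 1))^2 := by
      nlinarith [sq_nonneg (a * Complex.normSq (x 0) - c * Complex.normSq (x 1)), sq_nonneg z.im,
        mul_le_mul_of_nonneg_right hb (mul_nonneg hn0 hn1)]
    have h3 := Real.sqrt_le_sqrt hS2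
    rw [Real.sqrt_sq_eq_abs, Real.sqrt_sq hS] at h3
    have h4 := neg_abs_le (2*z.re)
    linarith

def s : ℝ := Real.sqrt 2
def v1 : Fin 2 → ℂ := ![(s:ℂ), 1 + Complex.I]
def w1 : Fin 2 → ℂ := ![(s:ℂ), -(1 + Complex.I)]
def v2 : Fin 2 → ℂ := ![(s:ℂ), 1 - Complex.I]
def w2 : Fin 2 → ℂ := ![(s:ℂ), -(1 - Complex.I)]

lemma hs2 : (s:ℝ) * s = 2 := Real.mul_self_sqrt (by norm_num)
lemma hspos : (0:ℝ) < s := Real.sqrt_pos.mpr (by norm_num)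
lemma hs2c : (s:ℂ) * (s:ℂ) = 2 := by rw [← Complex.ofReal_mul, hs2]; norm_num

lemma qid1 (M : Mat2) :
    star v1 ⬝ᵥ M *ᵥ v1 + star w1 ⬝ᵥ M *ᵥ w1 = 4 * (M 0 0 + M 1 1) := by
  simp [v1, w1, dotProduct, Matrix.mulVec, Pi.star_apply, Matrix.vecHead, Matrix.vecTail, Fin.sum_univ_two, Complex.conj_ofReal, map_add,
    Complex.conj_I]
  linear_combination 2 * M 0 0 * hs2c - 2 * M 1 1 * Complex.I_sq

lemma qid2 (M : Mat2) :
    star v2 ⬝ᵥ M *ᵥ v2 + star w2 ⬝ᵥ M *ᵥ w2 = 4 * (M 0 0 + M 1 1) := by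
  simp [v2, w2, dotProduct, Matrix.mulVec, Pi.star_apply, Matrix.vecHead, Matrix.vecTail, Fin.sum_univ_two, Complex.conj_ofReal, map_sub,
    Complex.conj_I]
  linear_combination 2 * M 0 0 * hs2c - 2 * M 1 1 * Complex.I_sq

lemma qsig1v : star v1 ⬝ᵥ (sigma1 + sigma2) *ᵥ v1 = 4 * (s:ℂ) := by
  simp [v1, sigma1, sigma2, dotProduct, Matrix.mulVec, Pi.star_apply, Matrix.vecHead, Matrix.vecTail, Fin.sum_univ_two,
    Complex.conj_ofReal, map_add, Complex.conj_I, Matrix.add_apply]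
  linear_combination (- 2 * (s:ℂ)) * Complex.I_sq

lemma qsig1w : star w1 ⬝ᵥ (sigma1 + sigma2) *ᵥ w1 = -(4 * (s:ℂ)) := by
  simp [w1, sigma1, sigma2, dotProduct, Matrix.mulVec, Pi.star_apply, Matrix.vecHead, Matrix.vecTail, Fin.sum_univ_two,
    Complex.conj_ofReal, map_add, Complex.conj_I, Matrix.add_apply]
  linear_combination (2 * (s:ℂ)) * Complex.I_sq

lemma qsig2v : star v2 ⬝ᵥ (sigma1 - sigma2) *ᵥ v2 = 4 * (s:ℂ) := by
  simp [v2, sigma1, sigma2, dotProduct, Matrix.mulVec, Pi.star_apply, Matrix.vecHead, Matrix.vecTail, Fin.sum_univ_two,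
    Complex.conj_ofReal, map_sub, Complex.conj_I, Matrix.sub_apply]
  linear_combination (- 2 * (s:ℂ)) * Complex.I_sq

lemma qsig2w : star w2 ⬝ᵥ (sigma1 - sigma2) *ᵥ w2 = -(4 * (s:ℂ)) := by
  simp [w2, sigma1, sigma2, dotProduct, Matrix.mulVec, Pi.star_apply, Matrix.vecHead, Matrix.vecTail, Fin.sum_univ_two,
    Complex.conj_ofReal, map_sub, Complex.conj_I, Matrix.sub_apply]
  linear_combination (2 * (s:ℂ)) * Complex.I_sq

/-- real part of the quadratic form of a PSD matrix is nonnegative -/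
lemma q_nonneg {M : Mat2} (h : M.PosSemidef) (x : Fin 2 → ℂ) :
    0 ≤ (star x ⬝ᵥ M *ᵥ x).re := by
  have := h.dotProduct_mulVec_nonneg x
  rw [Complex.le_def] at this
  simpa using this.1

def eps (b : Bool) : ℝ := if b then 1 else -1
def bb (t : ℝ) (p : Bool × Bool) : ℂ :=
  ((eps p.1 * t / 4 : ℝ) : ℂ) - ((eps p.2 * t / 4 : ℝ) : ℂ) * Complex.I
def Gc (t : ℝ) (p : Bool × Bool) : Mat2 :=
  !![(((1:ℝ)/4 : ℝ):ℂ), bb t p; (starRingEnd ℂ) (bb t p), (((1:ℝ)/4 : ℝ):ℂ)]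

lemma Gc_psd (t : ℝ) (ht2 : t^2 ≤ 1/2) (p : Bool × Bool) : (Gc t p).PosSemidef := by
  apply psd2 _ _ _ (by norm_num) (by norm_num)
  have hnb : Complex.normSq (bb t p) = (eps p.1 * t / 4)^2 + (eps p.2 * t / 4)^2 := by
    simp [bb, Complex.normSq_apply]
    ring
  rw [hnb]
  have he1 : (eps p.1)^2 = 1 := by rcases p.1 <;> simp [eps]
  have he2 : (eps p.2)^2 = 1 := by rcases p.2 <;> simp [eps]
  nlinarith [he1, he2]

lemma Gc_sum (t : ℝ) : ∑ p : Bool × Bool, Gc t p = 1 := by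
  rw [Fintype.sum_prod_type]
  simp only [Fintype.sum_bool]
  ext i j
  fin_cases i <;> fin_cases j <;>
    simp [Gc, bb, eps, Matrix.add_apply, Matrix.one_apply, map_ofNat] <;> ring

lemma Gc_margx (t : ℝ) (x : Bool) : Gc t (x, true) + Gc t (x, false) = Atx t x := by
  cases x <;>
  · ext i j
    fin_cases i <;> fin_cases j <;>
      simp [Gc, Atx, sigma1, bb, eps, Matrix.add_apply, Matrix.one_apply, Matrix.smul_apply,
        map_ofNat] <;> ring

lemma Gc_margy (t : ℝ) (y : Bool) : Gc t (true, y) + Gc t (false, y) = Aty t y := by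
  cases y <;>
  · ext i j
    fin_cases i <;> fin_cases j <;>
      simp [Gc, Aty, sigma2, bb, eps, Matrix.add_apply, Matrix.one_apply, Matrix.smul_apply,
        map_ofNat] <;> ring

lemma hHlem (t : ℝ) : Atx t true - Aty t false = ((t:ℂ)/2) • (sigma1 + sigma2) := by
  ext i j
  fin_cases i <;> fin_cases j <;>
    simp [Atx, Aty, sigma1, sigma2, Matrix.add_apply, Matrix.sub_apply, Matrix.one_apply,
      Matrix.smul_apply] <;> ring

lemma hKlem (t : ℝ) : Atx t true - Aty t true = ((t:ℂ)/2) • (sigma1 - sigma2) := by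
  ext i j
  fin_cases i <;> fin_cases j <;>
    simp [Atx, Aty, sigma1, sigma2, Matrix.add_apply, Matrix.sub_apply, Matrix.one_apply,
      Matrix.smul_apply] <;> ring

end MubAux

set_option maxHeartbeats 1000000 in
/-- The mutually unbiased noisy qubit observables `A^{tx}`, `A^{ty}` (0 ≤ t ≤ 1) are
incompatible iff `1/√2 < t ≤ 1`. -/
theorem mub_qubit_incompatible_iff (t : ℝ) (ht0 : 0 ≤ t) (ht1 : t ≤ 1) :
    (¬ ∃ G : Bool × Bool → Mat2, IsPOVM G ∧
      (∀ x, G (x, true) + G (x, false) = Atx t x) ∧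
      (∀ y, G (true, y) + G (false, y) = Aty t y)) ↔
    1 / Real.sqrt 2 < t := by
  open MubAux in
  constructor
  · -- incompatible → 1/√2 < t ; contrapositive: t ≤ 1/√2 → compatible
    intro hinc
    by_contra hle
    push_neg at hle
    apply hinc
    have hle' : t ≤ 1 / s := hle
    have ht2 : t^2 ≤ 1/2 := by
      rw [le_div_iff₀ hspos] at hle'
      nlinarith [hs2, hspos]
    exact ⟨Gc t, ⟨Gc_psd t ht2, Gc_sum t⟩, Gc_margx t, Gc_margy t⟩
  · rintro hlt ⟨G, ⟨hpsd, hsum⟩, hx, hy⟩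
    have hlt' : 1 / s < t := hlt
    have hts : 1 < t * s := by
      rw [div_lt_iff₀ hspos] at hlt'
      linarith
    -- matrix relations
    have hH : G (true,true) - G (false,false) = ((t:ℂ)/2) • (sigma1 + sigma2) := by
      have h1 : G (true,true) - G (false,false)
          = (G (true,true) + G (true,false)) - (G (true,false) + G (false,false)) := by abel
      rw [h1, hx true, hy false, hHlem]
    have hK : G (true,false) - G (false,true) = ((t:ℂ)/2) • (sigma1 - sigma2) := by
      have h1 : G (true,false) - G (false,true)
          = (G (true,true) + G (true,false)) - (G (true,true) + G (false,true)) := by abel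
      rw [h1, hx true, hy true, hKlem]
    -- quadratic-form consequences
    have qsub : ∀ (M N : Mat2) (x : Fin 2 → ℂ),
        star x ⬝ᵥ (M - N) *ᵥ x = star x ⬝ᵥ M *ᵥ x - star x ⬝ᵥ N *ᵥ x := by
      intro M N x
      rw [Matrix.sub_mulVec, dotProduct_sub]
    have qsmul : ∀ (c : ℂ) (M : Mat2) (x : Fin 2 → ℂ),
        star x ⬝ᵥ (c • M) *ᵥ x = c * (star x ⬝ᵥ M *ᵥ x) := by
      intro c M x
      rw [Matrix.smul_mulVec, dotProduct_smul, smul_eq_mul]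
    have hts2 : (((t:ℂ))/2) * (4 * (s:ℂ)) = ((2*t*s : ℝ) : ℂ) := by push_cast; ring
    have hts3 : (((t:ℂ))/2) * (-(4 * (s:ℂ))) = ((-(2*t*s) : ℝ) : ℂ) := by push_cast; ring
    -- the eight real quantities
    have e1 : (star v1 ⬝ᵥ G (true,true) *ᵥ v1).re - (star v1 ⬝ᵥ G (false,false) *ᵥ v1).re
        = 2*t*s := by
      have := congrArg (fun M => (star v1 ⬝ᵥ M *ᵥ v1).re) hH
      simp only [qsub, qsmul, qsig1v, hts2, Complex.sub_re, Complex.ofReal_re] at this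
      linarith [this]
    have e2 : (star w1 ⬝ᵥ G (true,true) *ᵥ w1).re - (star w1 ⬝ᵥ G (false,false) *ᵥ w1).re
        = -(2*t*s) := by
      have := congrArg (fun M => (star w1 ⬝ᵥ M *ᵥ w1).re) hH
      simp only [qsub, qsmul, qsig1w, hts3, Complex.sub_re, Complex.ofReal_re] at this
      linarith [this]
    have h5 : star v2 ⬝ᵥ sigma1 *ᵥ v2 - star v2 ⬝ᵥ sigma2 *ᵥ v2 = 4 * (s:ℂ) := by
      rw [← dotProduct_sub, ← Matrix.sub_mulVec]; exact qsig2v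
    have h6 : star w2 ⬝ᵥ sigma1 *ᵥ w2 - star w2 ⬝ᵥ sigma2 *ᵥ w2 = -(4 * (s:ℂ)) := by
      rw [← dotProduct_sub, ← Matrix.sub_mulVec]; exact qsig2w
    have e3 : (star v2 ⬝ᵥ G (true,false) *ᵥ v2).re - (star v2 ⬝ᵥ G (false,true) *ᵥ v2).re
        = 2*t*s := by
      have := congrArg (fun M => (star v2 ⬝ᵥ M *ᵥ v2).re) hK
      simp only [qsub, qsmul, h5, hts2, Complex.sub_re, Complex.ofReal_re] at this
      linarith [this]
    have e4 : (star w2 ⬝ᵥ G (true,false) *ᵥ w2).re - (star w2 ⬝ᵥ G (false,true) *ᵥ w2).re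
        = -(2*t*s) := by
      have := congrArg (fun M => (star w2 ⬝ᵥ M *ᵥ w2).re) hK
      simp only [qsub, qsmul, h6, hts3, Complex.sub_re, Complex.ofReal_re] at this
      linarith [this]
    -- trace identities
    have tr1 : ∀ p : Bool × Bool,
        (star v1 ⬝ᵥ G p *ᵥ v1).re + (star w1 ⬝ᵥ G p *ᵥ w1).re
          = 4 * ((G p 0 0).re + (G p 1 1).re) := by
      intro p
      have := congrArg Complex.re (qid1 (G p))
      simpa [Complex.add_re, Complex.mul_re] using this
    have tr2 : ∀ p : Bool × Bool,
        (star v2 ⬝ᵥ G p *ᵥ v2).re + (star w2 ⬝ᵥ G p *ᵥ w2).re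
          = 4 * ((G p 0 0).re + (G p 1 1).re) := by
      intro p
      have := congrArg Complex.re (qid2 (G p))
      simpa [Complex.add_re, Complex.mul_re] using this
    -- total trace = 2
    have hsum4 : G (true,true) + G (true,false) + G (false,true) + G (false,false) = 1 := by
      rw [← hsum, Fintype.sum_prod_type]
      simp only [Fintype.sum_bool]
      abel
    have htr : ((G (true,true) 0 0).re + (G (true,true) 1 1).re)
        + ((G (true,false) 0 0).re + (G (true,false) 1 1).re)
        + ((G (false,true) 0 0).re + (G (false,true) 1 1).re)
        + ((G (false,false) 0 0).re + (G (false,false) 1 1).re) = 2 := by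
      have h00 := congrArg (fun M : Mat2 => (M 0 0).re) hsum4
      have h11 := congrArg (fun M : Mat2 => (M 1 1).re) hsum4
      simp [Matrix.add_apply, Matrix.one_apply, Complex.add_re] at h00 h11
      linarith
    -- nonnegativity
    have n1 := q_nonneg (hpsd (true,true)) v1
    have n2 := q_nonneg (hpsd (true,true)) w1
    have n3 := q_nonneg (hpsd (false,false)) v1
    have n4 := q_nonneg (hpsd (false,false)) w1
    have n5 := q_nonneg (hpsd (true,false)) v2
    have n6 := q_nonneg (hpsd (true,false)) w2
    have n7 := q_nonneg (hpsd (false,true)) v2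
    have n8 := q_nonneg (hpsd (false,true)) w2
    have t1 := tr1 (true,true)
    have t2 := tr1 (false,false)
    have t3 := tr2 (true,false)
    have t4 := tr2 (false,true)
    linarith [e1, e2, e3, e4, htr, hts, n1, n2, n3, n4, n5, n6, n7, n8, t1, t2, t3, t4]
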